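/- Let d be a positive integer and let P be any rational-valued function on the set of partitions of d. Then there exists a polynomial p in Q[X] of degree at most d such that for every finite field F_q, the sum over all monic squarefree polynomials f of degree d in F_q[x] of P(factorization type of f) equals p(q). -/

import Mathlib

open Polynomial

/-- The factorization type of a polynomial over a field: the multiset of degrees of its
irreducible factors, counted with multiplicity. -/
noncomputable def factorizationType {F : Type*} [Field F] (f : F[X]) : Multiset ℕ :=
  (UniqueFactorizationMonoid.factors f).map natDegree

namespace GLaux

open UniqueFactorizationMonoid

section Finiteness
-- polynomials of bounded degree over a finite field form a finite set
lemma finite_natDegree_le (F : Type*) [Field F] [Fintype F] (b : ℕ) :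
    {f : F[X] | f.natDegree ≤ b}.Finite := by
  have : Set.Finite (Set.univ : Set (Fin (b+1) → F)) := Set.finite_univ
  apply Set.Finite.of_finite_image (f := fun f : F[X] => fun i : Fin (b+1) => f.coeff i)
    (this.subset (Set.subset_univ _))
  intro f hf g hg h
  apply Polynomial.ext
  intro n
  by_cases hn : n ≤ b
  · exact congrFun h ⟨n, Nat.lt_succ_of_le hn⟩
  · rw [Polynomial.coeff_eq_zero_of_natDegree_lt (lt_of_le_of_lt hf (Nat.lt_of_not_le hn)),
      Polynomial.coeff_eq_zero_of_natDegree_lt (lt_of_le_of_lt hg (Nat.lt_of_not_le hn))]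

noncomputable def Nirr (F : Type*) [Field F] [Fintype F] (e : ℕ) : ℕ :=
  Nat.card {f : F[X] // f.Monic ∧ Irreducible f ∧ f.natDegree = e}

variable {F : Type*} [Field F] [Fintype F]

instance irrFinite (e : ℕ) : Finite {f : F[X] // f.Monic ∧ Irreducible f ∧ f.natDegree = e} := by
  have : Set.Finite {f : F[X] | f.Monic ∧ Irreducible f ∧ f.natDegree = e} :=
    (finite_natDegree_le F e).subset (fun f hf => le_of_eq hf.2.2)
  exact this

end Finiteness

section NormFactors
lemma mem_normalizedFactors_iff' {K : Type*} [Field K] [DecidableEq K] {h f : K[X]} (hh : h ≠ 0) :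
    f ∈ normalizedFactors h ↔ f.Monic ∧ Irreducible f ∧ f ∣ h := by
  classical
  constructor
  · intro hf
    have h1 := normalize_normalized_factor f hf
    have h2 := irreducible_of_normalized_factor f hf
    refine ⟨?_, h2, dvd_of_mem_normalizedFactors hf⟩
    have h3 := monic_normalize (p := f) h2.ne_zero
    rwa [h1] at h3
  · rintro ⟨hmon, hirr, hdvd⟩
    obtain ⟨g, hg, hassoc⟩ := exists_mem_normalizedFactors_of_dvd hh hirr hdvd
    have hgmon : g.Monic := by
      have h3 := monic_normalize (p := g) (irreducible_of_normalized_factor g hg).ne_zero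
      rwa [normalize_normalized_factor g hg] at h3
    rwa [eq_of_monic_of_associated hmon hgmon hassoc]

lemma prod_normalizedFactors_monic {K : Type*} [Field K] [DecidableEq K] {h : K[X]} (hm : h.Monic) :
    (normalizedFactors h).prod = h := by
  have hne : h ≠ 0 := hm.ne_zero
  refine eq_of_monic_of_associated ?_ hm (prod_normalizedFactors hne)
  have := monic_multiset_prod_of_monic (normalizedFactors h) id (fun f hf =>
    ((mem_normalizedFactors_iff' hne).mp hf).1)
  simpa using this

lemma natDegree_eq_sum_normalizedFactors {K : Type*} [Field K] [DecidableEq K] {h : K[X]} (hm : h.Monic) :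
    ((normalizedFactors h).map natDegree).sum = h.natDegree := by
  conv_rhs => rw [← prod_normalizedFactors_monic hm]
  exact (natDegree_multiset_prod_of_monic _ (fun f hf =>
    ((mem_normalizedFactors_iff' hm.ne_zero).mp hf).1)).symm


end NormFactors

section DvdIff

variable {F : Type*} [Field F] [Fintype F]

lemma fixed_of_adjoin {Ω : Type*} [Field Ω] [Algebra F Ω] (p : ℕ) [Fact p.Prime] [CharP Ω p]
    {m r : ℕ} (hq : Fintype.card F = p ^ m) (x : Ω) (hx : x ^ (Fintype.card F) ^ r = x)
    {y : Ω} (hy : y ∈ IntermediateField.adjoin F ({x} : Set Ω)) :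
    y ^ (Fintype.card F) ^ r = y := by
  have hqr : (Fintype.card F) ^ r = p ^ (m * r) := by rw [hq, pow_mul]
  induction hy using IntermediateField.adjoin_induction with
  | mem z hz => rwa [Set.mem_singleton_iff.mp hz]
  | algebraMap a => rw [← map_pow]; congr 1; exact FiniteField.pow_card_pow r a
  | add a b _ _ ha hb => rw [hqr] at ha hb ⊢; rw [add_pow_char_pow, ha, hb]
  | inv a _ ha => rw [inv_pow, ha]
  | mul a b _ _ ha hb => rw [mul_pow, ha, hb]

theorem irred_dvd_iff {n : ℕ} (hn : 0 < n) {f : F[X]} (hm : f.Monic) (hi : Irreducible f) :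
    f ∣ (X ^ (Fintype.card F) ^ n - X) ↔ f.natDegree ∣ n := by
  classical
  set q := Fintype.card F with hqdef
  have hq1 : 1 < q := Fintype.one_lt_card
  obtain ⟨p, hp⟩ := CharP.exists F
  haveI : CharP F p := hp
  obtain ⟨m, hpp, hqm⟩ := FiniteField.card F p
  haveI : Fact p.Prime := ⟨hpp⟩
  letI Ω := AlgebraicClosure F
  haveI : CharP Ω p := charP_of_injective_algebraMap (algebraMap F Ω).injective p
  have hdeg0 : f.degree ≠ 0 := (degree_pos_of_irreducible hi).ne'
  obtain ⟨x, hx⟩ := IsAlgClosed.exists_aeval_eq_zero Ω f hdeg0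
  have hint : IsIntegral F x := ⟨f, hm, hx⟩
  have hmin : minpoly F x = f := (minpoly.eq_of_irreducible_of_monic hi hx hm).symm
  set e := f.natDegree with hedef
  have he : 0 < e := hi.natDegree_pos
  set K := IntermediateField.adjoin F ({x} : Set Ω) with hKdef
  haveI : FiniteDimensional F K := IntermediateField.adjoin.finiteDimensional hint
  haveI : Finite K := Module.finite_of_finite F
  haveI : Fintype K := Fintype.ofFinite K
  have hcardK : Fintype.card K = q ^ e := by
    rw [Module.card_eq_pow_finrank (K := F) (V := K), IntermediateField.adjoin.finrank hint, hmin]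
  have hxK : x ∈ K := IntermediateField.mem_adjoin_simple_self F x
  have hpow : ∀ k : ℕ, x ^ q ^ (e * k) = x := by
    intro k
    have h1 : (⟨x, hxK⟩ : K) ^ (q ^ e) ^ k = ⟨x, hxK⟩ := by
      rw [← hcardK]; exact FiniteField.pow_card_pow k _
    have h2 := congrArg (Subtype.val) h1
    simpa [← pow_mul, SubmonoidClass.coe_pow] using h2
  have key : f ∣ (X ^ q ^ n - X) ↔ x ^ q ^ n = x := by
    constructor
    · rintro ⟨g, hg⟩
      have h0 : (Polynomial.aeval x) (X ^ q ^ n - X : F[X]) = 0 := by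
        rw [hg, map_mul, hx, zero_mul]
      simpa [sub_eq_zero] using h0
    · intro h
      rw [← hmin]
      apply minpoly.dvd
      simp [sub_eq_zero, h]
  rw [key]
  constructor
  · intro hxn
    have hr : x ^ q ^ (n % e) = x := by
      calc x ^ q ^ (n % e) = (x ^ q ^ (e * (n / e))) ^ q ^ (n % e) := by rw [hpow]
        _ = x ^ (q ^ (e * (n / e)) * q ^ (n % e)) := (pow_mul x _ _).symm
        _ = x ^ q ^ (e * (n / e) + n % e) := by rw [pow_add]
        _ = x ^ q ^ n := by rw [Nat.div_add_mod]
        _ = x := hxn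
    rcases Nat.eq_zero_or_pos (n % e) with h0 | hpos
    · exact Nat.dvd_of_mod_eq_zero h0
    · exfalso
      set r := n % e with hrdef
      have hre : r < e := Nat.mod_lt n he
      have hfix : ∀ y : K, (y : Ω) ^ q ^ r = (y : Ω) := fun y =>
        fixed_of_adjoin p hqm x hr y.2
      have hpoly : (X ^ q ^ r - X : Polynomial Ω) ≠ 0 :=
        FiniteField.X_pow_card_pow_sub_X_ne_zero Ω hpos.ne' hq1
      set S : Finset Ω := Finset.univ.image (fun y : K => (y : Ω)) with hSdef
      have hScard : S.card = q ^ e := by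
        rw [hSdef, Finset.card_image_of_injective _ Subtype.val_injective,
          Finset.card_univ, hcardK]
      have hSsub : S ⊆ (X ^ q ^ r - X : Polynomial Ω).roots.toFinset := by
        intro z hz
        obtain ⟨y, _, rfl⟩ := Finset.mem_image.mp hz
        rw [Multiset.mem_toFinset, Polynomial.mem_roots hpoly]
        simp [Polynomial.IsRoot, sub_eq_zero, hfix y]
      have hle : q ^ e ≤ q ^ r := by
        calc q ^ e = S.card := hScard.symm
          _ ≤ (X ^ q ^ r - X : Polynomial Ω).roots.toFinset.card := Finset.card_le_card hSsub
          _ ≤ Multiset.card (X ^ q ^ r - X : Polynomial Ω).roots := Multiset.toFinset_card_le _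
          _ ≤ (X ^ q ^ r - X : Polynomial Ω).natDegree := Polynomial.card_roots' _
          _ = q ^ r := FiniteField.X_pow_card_pow_sub_X_natDegree_eq Ω hpos.ne' hq1
      exact absurd hle (not_le.mpr (Nat.pow_lt_pow_right hq1 hre))
  · rintro ⟨k, rfl⟩
    exact hpow k


theorem gauss {n : ℕ} (hn : 0 < n) :
    ∑ e ∈ n.divisors, e * Nirr F e = (Fintype.card F) ^ n := by
  classical
  set q := Fintype.card F with hqdef
  have hq1 : 1 < q := Fintype.one_lt_card
  obtain ⟨p, hp⟩ := CharP.exists F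
  haveI : CharP F p := hp
  obtain ⟨m, hpp, hqm⟩ := FiniteField.card F p
  set g : F[X] := X ^ q ^ n - X with hgdef
  have hqn1 : 1 < q ^ n := Nat.one_lt_pow hn.ne' hq1
  have hgmonic : g.Monic := by
    apply monic_X_pow_sub
    calc degree (X : F[X]) ≤ 1 := degree_X_le
      _ < (q ^ n : ℕ) := by exact_mod_cast Nat.one_lt_cast.mpr hqn1
  have hgdeg : g.natDegree = q ^ n :=
    FiniteField.X_pow_card_pow_sub_X_natDegree_eq F hn.ne' hq1
  have hgne : g ≠ 0 := hgmonic.ne_zero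
  have hgsf : Squarefree g := by
    have hdvd : p ∣ q ^ n := by
      refine dvd_pow ?_ hn.ne'
      rw [hqdef, hqm]
      exact dvd_pow_self p m.2.ne'
    exact (galois_poly_separable p (q ^ n) hdvd).squarefree
  set D : Finset F[X] := (normalizedFactors g).toFinset with hDdef
  have hmem : ∀ f : F[X], f ∈ D ↔ f.Monic ∧ Irreducible f ∧ f.natDegree ∣ n := by
    intro f
    rw [hDdef, Multiset.mem_toFinset, mem_normalizedFactors_iff' hgne]
    exact ⟨fun ⟨h1, h2, h3⟩ => ⟨h1, h2, (irred_dvd_iff hn h1 h2).mp h3⟩,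
      fun ⟨h1, h2, h3⟩ => ⟨h1, h2, (irred_dvd_iff hn h1 h2).mpr h3⟩⟩
  have hval : D.1 = normalizedFactors g := by
    rw [hDdef, Multiset.toFinset_val]
    exact Multiset.dedup_eq_self.mpr ((squarefree_iff_nodup_normalizedFactors hgne).mp hgsf)
  have hsum : ∑ f ∈ D, f.natDegree = q ^ n := by
    rw [← hgdeg, ← natDegree_eq_sum_normalizedFactors hgmonic]
    rw [Finset.sum_eq_multiset_sum, hval]
  have hmap : ∀ f ∈ D, f.natDegree ∈ n.divisors := fun f hf =>
    Nat.mem_divisors.mpr ⟨((hmem f).mp hf).2.2, hn.ne'⟩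
  calc ∑ e ∈ n.divisors, e * Nirr F e
      = ∑ e ∈ n.divisors, ∑ f ∈ D.filter (fun f => f.natDegree = e), f.natDegree := by
        refine Finset.sum_congr rfl fun e he => ?_
        have hiff : ∀ f : F[X],
            (f.Monic ∧ Irreducible f ∧ f.natDegree = e) ↔ (f ∈ D ∧ f.natDegree = e) := by
          intro f
          constructor
          · rintro ⟨h1, h2, h3⟩
            exact ⟨(hmem f).mpr ⟨h1, h2, h3 ▸ (Nat.mem_divisors.mp he).1⟩, h3⟩
          · rintro ⟨h1, h2⟩
            exact ⟨((hmem f).mp h1).1, ((hmem f).mp h1).2.1, h2⟩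
        have hcard : (D.filter (fun f => f.natDegree = e)).card = Nirr F e := by
          rw [Nirr, ← Nat.card_eq_finsetCard]
          exact (Nat.card_congr (Equiv.subtypeEquivRight (fun f => by
            rw [Finset.mem_filter]; exact hiff f))).symm
        rw [Finset.sum_congr rfl (fun f hf => (Finset.mem_filter.mp hf).2),
          Finset.sum_const, smul_eq_mul, hcard, mul_comm]
      _ = ∑ f ∈ D, f.natDegree := Finset.sum_fiberwise_of_maps_to hmap _
      _ = q ^ n := hsum

end DvdIff

section Mpoly
noncomputable def M : ℕ → ℚ[X]
  | n => C ((n : ℚ)⁻¹) *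
      ((X : ℚ[X]) ^ n - ∑ e ∈ n.properDivisors.attach, C (e.1 : ℚ) * M e.1)
  decreasing_by exact (Nat.mem_properDivisors.mp e.2).2

lemma M_natDegree_le (n : ℕ) : (M n).natDegree ≤ n := by
  induction n using Nat.strong_induction_on with
  | _ n ih =>
    rw [M]
    refine le_trans (natDegree_C_mul_le _ _) ?_
    refine le_trans (natDegree_sub_le _ _) ?_
    rw [natDegree_X_pow]
    refine max_le le_rfl ?_
    refine le_trans (natDegree_sum_le _ _) ?_
    refine Finset.sup_le fun e he => ?_
    have hlt := (Nat.mem_properDivisors.mp e.2).2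
    calc (C (e.1 : ℚ) * M e.1).natDegree ≤ (M e.1).natDegree := natDegree_C_mul_le _ _
      _ ≤ e.1 := ih e.1 hlt
      _ ≤ n := hlt.le

lemma M_eval (F : Type*) [Field F] [Fintype F] {n : ℕ} (hn : 0 < n) :
    (M n).eval (Fintype.card F : ℚ) = Nirr F n := by
  set q : ℚ := (Fintype.card F : ℚ) with hq
  induction n using Nat.strong_induction_on with
  | _ n ih =>
    have hg : q ^ n = ∑ e ∈ n.divisors, (e : ℚ) * (Nirr F e : ℚ) := by
      have h0 := congrArg (Nat.cast (R := ℚ)) (gauss (F := F) hn)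
      push_cast at h0
      rw [hq]
      exact h0.symm
    have hsplit : (n : ℚ) * (Nirr F n : ℚ) +
        ∑ e ∈ n.properDivisors, (e : ℚ) * (Nirr F e : ℚ) =
        ∑ e ∈ n.divisors, (e : ℚ) * (Nirr F e : ℚ) := by
      rw [← Nat.cons_self_properDivisors hn.ne', Finset.sum_cons]
    have heval : (M n).eval q = (n : ℚ)⁻¹ *
        (q ^ n - ∑ e ∈ n.properDivisors, (e : ℚ) * (Nirr F e : ℚ)) := by
      rw [M]
      rw [eval_mul, eval_C, eval_sub, eval_pow, eval_X, eval_finset_sum]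
      congr 2
      rw [← Finset.sum_attach n.properDivisors (fun e => (e : ℚ) * (Nirr F e : ℚ))]
      refine Finset.sum_congr rfl fun e he => ?_
      rw [eval_mul, eval_C, ih e.1 (Nat.mem_properDivisors.mp e.2).2
        (Nat.pos_of_mem_properDivisors e.2)]
    rw [heval]
    have hn0 : (n : ℚ) ≠ 0 := Nat.cast_ne_zero.mpr hn.ne'
    have key : q ^ n - ∑ e ∈ n.properDivisors, (e : ℚ) * (Nirr F e : ℚ) =
        (n : ℚ) * (Nirr F n : ℚ) := by
      rw [hg, ← hsplit]; ring
    rw [key, inv_mul_cancel_left₀ hn0]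

end Mpoly

section Count

variable {β : Type*} [DecidableEq β] (P : β → Prop) (g : β → ℕ) (μ : Multiset ℕ)

/-- Finsets of elements satisfying `P` whose multiset of `g`-values is `μ`. -/
def TypeSet : Type _ :=
  {s : Finset β // (∀ b ∈ s, P b) ∧ s.1.map g = μ}

/-- The pieces indexed by a value `j`. -/
def Piece (j : ℕ) : Type _ :=
  {t : Finset β // (∀ b ∈ t, P b ∧ g b = j) ∧ t.card = μ.count j}

variable {P g μ}

lemma piece_disjoint (t : ∀ j : μ.toFinset, Piece P g μ j.1) :
    (↑μ.toFinset.attach : Set {x // x ∈ μ.toFinset}).PairwiseDisjoint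
      (fun j => (t j).1) := by
  intro j _ j' _ hjj'
  simp only [Function.onFun]
  rw [Finset.disjoint_left]
  intro b hb hb'
  exact hjj' (Subtype.ext (((t j).2.1 b hb).2.symm.trans ((t j').2.1 b hb').2))

def unionOf (t : ∀ j : μ.toFinset, Piece P g μ j.1) : Finset β :=
  μ.toFinset.attach.disjiUnion (fun j => (t j).1) (piece_disjoint t)

lemma mem_unionOf {t : ∀ j : μ.toFinset, Piece P g μ j.1} {b : β} :
    b ∈ unionOf t ↔ ∃ j, b ∈ (t j).1 := by
  rw [unionOf, Finset.mem_disjiUnion]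
  constructor
  · rintro ⟨j, _, hb⟩; exact ⟨j, hb⟩
  · rintro ⟨j, hb⟩; exact ⟨j, Finset.mem_attach _ _, hb⟩

lemma unionOf_map (t : ∀ j : μ.toFinset, Piece P g μ j.1) :
    (unionOf t).1.map g = μ := by
  rw [unionOf, Finset.disjiUnion_val, Multiset.map_bind]
  have h2 : ∀ j : μ.toFinset,
      Multiset.map g ((t j).1).1 = Multiset.replicate (μ.count j.1) j.1 := by
    intro j
    rw [Multiset.eq_replicate]
    refine ⟨by rw [Multiset.card_map]; exact (t j).2.2, ?_⟩
    intro b hb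
    rw [Multiset.mem_map] at hb
    obtain ⟨a, ha, rfl⟩ := hb
    exact ((t j).2.1 a ha).2
  calc μ.toFinset.attach.1.bind (fun j => Multiset.map g ((t j).1).1)
      = μ.toFinset.attach.1.bind (fun j => Multiset.replicate (μ.count j.1) j.1) :=
        Multiset.bind_congr (fun j _ => h2 j)
    _ = ∑ j ∈ μ.toFinset.attach, Multiset.replicate (μ.count j.1) j.1 := rfl
    _ = ∑ j ∈ μ.toFinset, Multiset.replicate (μ.count j) j :=
        Finset.sum_attach μ.toFinset (fun j => Multiset.replicate (μ.count j) j)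
    _ = ∑ j ∈ μ.toFinset, μ.count j • ({j} : Multiset ℕ) :=
        Finset.sum_congr rfl fun j _ => (Multiset.nsmul_singleton _ _).symm
    _ = μ := Multiset.toFinset_sum_count_nsmul_eq μ

def typeEquiv : TypeSet P g μ ≃ (∀ j : μ.toFinset, Piece P g μ j.1) where
  toFun s j := ⟨s.1.filter (fun b => g b = j.1),
    fun b hb => ⟨s.2.1 b (Finset.mem_of_mem_filter b hb), (Finset.mem_filter.mp hb).2⟩, by
      have h1 : (s.1.filter (fun b => g b = j.1)).card =
          Multiset.card (Multiset.filter (fun b => g b = j.1) s.1.1) := by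
        rw [← Finset.filter_val]; rfl
      have h3 : Multiset.count j.1 (Multiset.map g s.1.1) = Multiset.count j.1 μ :=
        congrArg (Multiset.count j.1) s.2.2
      rw [h1, ← h3, Multiset.count_map]
      congr 1
      exact Multiset.filter_congr (fun b _ => by exact eq_comm)⟩
  invFun t := ⟨unionOf t,
    fun b hb => by
      obtain ⟨j, hbj⟩ := mem_unionOf.mp hb
      exact ((t j).2.1 b hbj).1,
    unionOf_map t⟩
  left_inv s := by
    apply Subtype.ext
    ext b
    show b ∈ unionOf _ ↔ b ∈ s.1
    refine mem_unionOf.trans ?_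
    constructor
    · rintro ⟨j, hb⟩
      exact Finset.mem_of_mem_filter b hb
    · intro hb
      have hgb : g b ∈ μ.toFinset := by
        rw [Multiset.mem_toFinset, ← s.2.2, Multiset.mem_map]
        exact ⟨b, hb, rfl⟩
      exact ⟨⟨g b, hgb⟩, Finset.mem_filter.mpr ⟨hb, rfl⟩⟩
  right_inv t := by
    funext j
    apply Subtype.ext
    ext b
    rw [Finset.mem_filter, mem_unionOf]
    constructor
    · rintro ⟨⟨j', hb⟩, hgb⟩
      have : j' = j := Subtype.ext (((t j').2.1 b hb).2.symm.trans hgb)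
      rwa [← this]
    · intro hb
      exact ⟨⟨j, hb⟩, ((t j).2.1 b hb).2⟩

omit [DecidableEq β] in
lemma card_fiber_finsets (j k : ℕ) (hfin : {b : β | P b ∧ g b = j}.Finite) :
    Nat.card {t : Finset β // (∀ b ∈ t, P b ∧ g b = j) ∧ t.card = k} =
      (Nat.card {b : β // P b ∧ g b = j}).choose k := by
  classical
  set A : Finset β := hfin.toFinset with hA
  have hcardA : Nat.card {b : β // P b ∧ g b = j} = A.card := by
    rw [← Nat.card_eq_finsetCard]
    exact Nat.card_congr (Equiv.subtypeEquivRight fun b => by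
      rw [hA, Set.Finite.mem_toFinset]; rfl)
  rw [hcardA, ← Finset.card_powersetCard, ← Nat.card_eq_finsetCard]
  apply Nat.card_congr
  apply Equiv.subtypeEquivRight
  intro t
  rw [Finset.mem_powersetCard]
  constructor
  · rintro ⟨h1, h2⟩
    exact ⟨fun b hb => (hfin.mem_toFinset).mpr (h1 b hb), h2⟩
  · rintro ⟨h1, h2⟩
    exact ⟨fun b hb => (hfin.mem_toFinset).mp (h1 hb), h2⟩

lemma card_type_finsets (hfin : ∀ j, {b : β | P b ∧ g b = j}.Finite) :
    Nat.card (TypeSet P g μ) =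
      ∏ j ∈ μ.toFinset, (Nat.card {b : β // P b ∧ g b = j}).choose (μ.count j) := by
  calc Nat.card (TypeSet P g μ)
      = ∏ j : μ.toFinset, Nat.card (Piece P g μ j.1) := by
        rw [Nat.card_congr (typeEquiv (P := P) (g := g) (μ := μ)), Nat.card_pi]
    _ = ∏ j : μ.toFinset, (Nat.card {b : β // P b ∧ g b = j.1}).choose (μ.count j.1) :=
        Finset.prod_congr rfl fun j _ => card_fiber_finsets j.1 (μ.count j.1) (hfin j.1)
    _ = ∏ j ∈ μ.toFinset, (Nat.card {b : β // P b ∧ g b = j}).choose (μ.count j) :=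
        Finset.prod_coe_sort μ.toFinset
          (fun j => (Nat.card {b : β // P b ∧ g b = j}).choose (μ.count j))


end Count

section PolyCount

lemma factorizationType_eq {K : Type*} [Field K] [DecidableEq K] (f : K[X]) :
    factorizationType f = (normalizedFactors f).map natDegree := by
  rw [factorizationType, normalizedFactors, Multiset.map_map]
  refine Multiset.map_congr rfl fun x hx => ?_
  show x.natDegree = (normalize x).natDegree
  exact (natDegree_eq_of_degree_eq degree_normalize).symm

lemma normalizedFactors_multiset_prod_monic {K : Type*} [Field K] [DecidableEq K]
    (m : Multiset K[X]) (h : ∀ f ∈ m, f.Monic ∧ Irreducible f) :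
    normalizedFactors m.prod = m := by
  induction m using Multiset.induction with
  | empty => simpa using UniqueFactorizationMonoid.normalizedFactors_one
  | cons a m ih =>
    have ha : a ≠ 0 := (h a (Multiset.mem_cons_self a m)).1.ne_zero
    have hmm : ∀ f ∈ m, f.Monic ∧ Irreducible f := fun f hf => h f (Multiset.mem_cons_of_mem hf)
    have hm : m.prod ≠ 0 := by
      have : m.prod.Monic := by
        have := monic_multiset_prod_of_monic m id (fun f hf => (hmm f hf).1)
        simpa using this
      exact this.ne_zero
    rw [Multiset.prod_cons, normalizedFactors_mul ha hm,
      normalizedFactors_irreducible (h a (Multiset.mem_cons_self a m)).2,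
      (h a (Multiset.mem_cons_self a m)).1.normalize_eq_self, ih hmm,
      ← Multiset.singleton_add]

variable {F : Type*} [Field F] [Fintype F] [DecidableEq F]

noncomputable def polyEquiv (d : ℕ) (μ : Multiset ℕ) (hsum : μ.sum = d) :
    {f : F[X] // f.Monic ∧ f.natDegree = d ∧ Squarefree f ∧ factorizationType f = μ} ≃
      TypeSet (fun f : F[X] => f.Monic ∧ Irreducible f) natDegree μ where
  toFun f := ⟨(normalizedFactors f.1).toFinset, by
    have hne : f.1 ≠ 0 := f.2.1.ne_zero
    have hval : ((normalizedFactors f.1).toFinset).1 = normalizedFactors f.1 := by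
      rw [Multiset.toFinset_val]
      exact Multiset.dedup_eq_self.mpr
        ((squarefree_iff_nodup_normalizedFactors hne).mp f.2.2.2.1)
    constructor
    · intro g hg
      have := (mem_normalizedFactors_iff' hne).mp (Multiset.mem_toFinset.mp hg)
      exact ⟨this.1, this.2.1⟩
    · rw [hval, ← factorizationType_eq]
      exact f.2.2.2.2⟩
  invFun s := ⟨s.1.1.prod, by
    have hmon : ∀ g ∈ s.1.1, Monic g ∧ Irreducible g := s.2.1
    have hpm : s.1.1.prod.Monic := by
      have := monic_multiset_prod_of_monic s.1.1 id (fun g hg => (hmon g hg).1)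
      simpa using this
    have hnf : normalizedFactors s.1.1.prod = s.1.1 :=
      normalizedFactors_multiset_prod_monic s.1.1 hmon
    refine ⟨hpm, ?_, ?_, ?_⟩
    · have := natDegree_multiset_prod_of_monic s.1.1 (fun g hg => (hmon g hg).1)
      rw [this, s.2.2, hsum]
    · rw [squarefree_iff_nodup_normalizedFactors hpm.ne_zero, hnf]
      exact s.1.2
    · rw [factorizationType_eq, hnf, s.2.2]⟩
  left_inv f := by
    apply Subtype.ext
    show ((normalizedFactors f.1).toFinset).1.prod = f.1
    have hne : f.1 ≠ 0 := f.2.1.ne_zero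
    rw [Multiset.toFinset_val, Multiset.dedup_eq_self.mpr
      ((squarefree_iff_nodup_normalizedFactors hne).mp f.2.2.2.1)]
    exact prod_normalizedFactors_monic f.2.1
  right_inv s := by
    apply Subtype.ext
    show (normalizedFactors s.1.1.prod).toFinset = s.1
    rw [normalizedFactors_multiset_prod_monic s.1.1 s.2.1, Finset.val_toFinset]

theorem count_type (d : ℕ) (μ : Multiset ℕ) (hsum : μ.sum = d) :
    Nat.card {f : F[X] // f.Monic ∧ f.natDegree = d ∧ Squarefree f ∧ factorizationType f = μ} =
      ∏ j ∈ μ.toFinset, (Nirr F j).choose (μ.count j) := by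
  have hfin : ∀ j, {f : F[X] | (f.Monic ∧ Irreducible f) ∧ f.natDegree = j}.Finite := by
    intro j
    have : Finite {f : F[X] // (f.Monic ∧ Irreducible f) ∧ f.natDegree = j} :=
      Finite.of_equiv _ (Equiv.subtypeEquivRight fun f => and_assoc.symm)
    exact @Set.toFinite _ _ this
  rw [Nat.card_congr (polyEquiv d μ hsum), card_type_finsets hfin]
  refine Finset.prod_congr rfl fun j _ => ?_
  congr 1
  rw [Nirr]
  exact Nat.card_congr (Equiv.subtypeEquivRight fun f => and_assoc)


end PolyCount

section Assemble
noncomputable def chooseP (k : ℕ) : ℚ[X] := C ((k.factorial : ℚ)⁻¹) * descPochhammer ℚ k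

lemma chooseP_natDegree_le (k : ℕ) : (chooseP k).natDegree ≤ k :=
  le_trans (natDegree_C_mul_le _ _) (le_of_eq (descPochhammer_natDegree ℚ k))

lemma chooseP_eval (k n : ℕ) : (chooseP k).eval (n : ℚ) = (n.choose k : ℚ) := by
  rw [chooseP, eval_mul, eval_C, descPochhammer_eval_eq_descFactorial,
    Nat.descFactorial_eq_factorial_mul_choose]
  have hk : ((k.factorial : ℕ) : ℚ) ≠ 0 := Nat.cast_ne_zero.mpr k.factorial_ne_zero
  push_cast
  field_simp

noncomputable def pOf (μ : Multiset ℕ) : ℚ[X] :=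
  ∏ j ∈ μ.toFinset, (chooseP (μ.count j)).comp (M j)

lemma sum_eq_toFinset_sum (μ : Multiset ℕ) : μ.sum = ∑ j ∈ μ.toFinset, μ.count j * j := by
  conv_lhs => rw [← Multiset.map_id μ]
  rw [Finset.sum_multiset_map_count]
  exact Finset.sum_congr rfl fun j _ => by simp [smul_eq_mul]

lemma pOf_natDegree_le (μ : Multiset ℕ) : (pOf μ).natDegree ≤ μ.sum := by
  refine le_trans (natDegree_prod_le _ _) ?_
  rw [sum_eq_toFinset_sum]
  refine Finset.sum_le_sum fun j _ => ?_
  calc ((chooseP (μ.count j)).comp (M j)).natDegree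
      ≤ (chooseP (μ.count j)).natDegree * (M j).natDegree := natDegree_comp_le
    _ ≤ μ.count j * j := Nat.mul_le_mul (chooseP_natDegree_le _) (M_natDegree_le _)

lemma pOf_eval (μ : Multiset ℕ) (hpos : ∀ j ∈ μ, 0 < j) (F : Type*) [Field F] [Fintype F] :
    (pOf μ).eval (Fintype.card F : ℚ) =
      ∏ j ∈ μ.toFinset, ((Nirr F j).choose (μ.count j) : ℚ) := by
  rw [pOf, eval_prod]
  refine Finset.prod_congr rfl fun j hj => ?_
  rw [eval_comp, M_eval F (hpos j (Multiset.mem_toFinset.mp hj)), chooseP_eval]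

end Assemble

end GLaux

/-- For any factorization statistic `P` on partitions of `d`, there is a polynomial
`p ∈ ℚ[X]` of degree at most `d` such that for every finite field `F_q`,
`∑_{f monic squarefree, deg f = d} P(factorization type of f) = p(q)`. -/
theorem statement12 (d : ℕ) (hd : 0 < d) (P : Nat.Partition d → ℚ) :
    ∃ p : Polynomial ℚ, p.natDegree ≤ d ∧
      ∀ (F : Type) [Field F] [Fintype F],
        ∑ lam : Nat.Partition d, P lam *
            (Nat.card {f : F[X] // f.Monic ∧ f.natDegree = d ∧ Squarefree f ∧
              factorizationType f = lam.parts} : ℚ) =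
          p.eval (Fintype.card F : ℚ) := by
  refine ⟨∑ lam : Nat.Partition d, C (P lam) * GLaux.pOf lam.parts, ?_, ?_⟩
  · refine natDegree_sum_le_of_forall_le _ _ fun lam _ => ?_
    refine le_trans (natDegree_C_mul_le _ _) ?_
    exact le_trans (GLaux.pOf_natDegree_le _) (le_of_eq lam.parts_sum)
  · intro F _ _
    rw [eval_finset_sum]
    refine Finset.sum_congr rfl fun lam _ => ?_
    haveI : DecidableEq F := Classical.decEq F
    rw [eval_mul, eval_C]
    congr 1
    rw [GLaux.count_type d lam.parts lam.parts_sum,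
      GLaux.pOf_eval lam.parts (fun j hj => lam.parts_pos hj) F]
    push_cast
    rfl
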